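/- If v ∈ RG is such that [I_n | σ(v)] generates a self-dual code over R, then v is a unit in RG with inverse −v^T. -/

import Mathlib

/-- The matrix σ(v) of a group ring element, with (i,j) entry the coefficient of i⁻¹ * j. -/
noncomputable def sigmaMat {R G : Type*} [Semiring R] [Group G] (v : MonoidAlgebra R G) :
    Matrix G G R := Matrix.of fun i j => v.coeff (i⁻¹ * j)

/-- The canonical involution on a group ring, sending Σ αᵢ gᵢ to Σ αᵢ gᵢ⁻¹. -/
noncomputable def transInvol {R G : Type*} [Semiring R] [Group G] (v : MonoidAlgebra R G) :
    MonoidAlgebra R G := MonoidAlgebra.ofCoeff (Finsupp.equivMapDomain (Equiv.inv G) v.coeff)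
/-- The Euclidean dual of a linear code C ⊆ R^ι. -/
noncomputable def dualCode {R ι : Type*} [CommRing R] [Fintype ι] (C : Submodule R (ι → R)) :
    Submodule R (ι → R) where
  carrier := {x | ∀ c ∈ C, ∑ i, x i * c i = 0}
  add_mem' := by
    intro a b ha hb c hc
    have h1 := ha c hc
    have h2 := hb c hc
    simp only [Pi.add_apply, add_mul, Finset.sum_add_distrib, h1, h2, add_zero]
  zero_mem' := by intro c hc; simp
  smul_mem' := by
    intro r x hx c hc
    have h := hx c hc
    simp only [Pi.smul_apply, smul_eq_mul, mul_assoc]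
    rw [← Finset.mul_sum, h, mul_zero]

open scoped Matrix in
lemma mul_apply_fintype {R G : Type*} [Semiring R] [Group G] [Fintype G] [DecidableEq G]
    (f g : MonoidAlgebra R G) (x : G) :
    (f * g).coeff x = ∑ a : G, f.coeff a * g.coeff (a⁻¹ * x) := by
  rw [MonoidAlgebra.coeff_mul_apply_left]
  exact Finsupp.sum_fintype _ _ (fun a => by simp)

open scoped Matrix in
/-- If [Iₙ | σ(v)] generates a self-dual code over a finite commutative Frobenius ring,
    then v is a unit in RG with inverse -vᵀ. -/
theorem stmt_19 (R G : Type*) [CommRing R] [Fintype R] [Group G] [Fintype G] [DecidableEq G]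
    (hFrob : ∀ (ι : Type) [Fintype ι] (C : Submodule R (ι → R)),
      Nat.card C * Nat.card (dualCode C) = Nat.card R ^ Fintype.card ι)
    (v : MonoidAlgebra R G)
    (hsd : Submodule.span R
        (Set.range fun i => Matrix.fromCols (1 : Matrix G G R) (sigmaMat v) i)
      = dualCode (Submodule.span R
        (Set.range fun i => Matrix.fromCols (1 : Matrix G G R) (sigmaMat v) i))) :
    v * (-(transInvol v)) = 1 ∧ (-(transInvol v)) * v = 1 := by
  set M : G → (G ⊕ G) → R := fun i => Matrix.fromCols (1 : Matrix G G R) (sigmaMat v) i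
    with hM
  have hmem : ∀ i : G, M i ∈ Submodule.span R (Set.range M) :=
    fun i => Submodule.subset_span (Set.mem_range_self i)
  have key : ∀ i j : G, ∑ k : G, v.coeff (i⁻¹ * k) * v.coeff (j⁻¹ * k) = if i = j then (-1 : R) else 0 := by
    intro i j
    have h1 : M i ∈ dualCode (Submodule.span R (Set.range M)) := by
      rw [← hsd]; exact hmem i
    have h2 := h1 (M j) (hmem j)
    rw [Fintype.sum_sum_type] at h2
    simp only [hM, Matrix.fromCols_apply_inl, Matrix.fromCols_apply_inr,
      Matrix.one_apply, sigmaMat, Matrix.of_apply, ite_mul, one_mul, zero_mul,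
      Finset.sum_ite_eq, Finset.mem_univ, if_true] at h2
    by_cases hij : i = j
    · subst hij
      rw [if_pos rfl]
      exact eq_neg_of_add_eq_zero_right (by simpa using h2)
    · rw [if_neg (fun h : j = i => hij h.symm)] at h2
      rw [if_neg hij]
      simpa using h2
  -- matrix form
  set A : Matrix G G R := sigmaMat v with hA
  have hmat : A * (-Aᵀ) = 1 := by
    ext i j
    simp only [Matrix.mul_apply, Matrix.neg_apply, Matrix.transpose_apply, hA, sigmaMat,
      Matrix.of_apply, Matrix.one_apply, mul_neg]
    rw [Finset.sum_neg_distrib, key i j]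
    by_cases hij : i = j <;> simp [hij]
  have hmat2 : (-Aᵀ) * A = 1 := mul_eq_one_comm.mp hmat
  have key2 : ∀ i j : G, ∑ k : G, v.coeff (k⁻¹ * i) * v.coeff (k⁻¹ * j) = if i = j then (-1 : R) else 0 := by
    intro i j
    have := congrFun (congrFun hmat2 i) j
    simp only [Matrix.mul_apply, Matrix.neg_apply, Matrix.transpose_apply, hA, sigmaMat,
      Matrix.of_apply, Matrix.one_apply, neg_mul] at this
    rw [Finset.sum_neg_distrib, neg_eq_iff_eq_neg] at this
    rw [this]
    by_cases hij : i = j <;> simp [hij]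
  have htrans : ∀ b : G, (transInvol v).coeff b = v.coeff b⁻¹ := fun b => rfl
  have hone : ∀ g : G, (1 : MonoidAlgebra R G).coeff g = if g = 1 then (1 : R) else 0 := by
    intro g
    simp [MonoidAlgebra.one_def, MonoidAlgebra.coeff_single, Finsupp.single_apply, eq_comm]
  constructor
  · ext g
    rw [mul_apply_fintype]
    have h : ∀ a : G, v.coeff a * (-(transInvol v)).coeff (a⁻¹ * g) = -(v.coeff a * v.coeff (g⁻¹ * a)) := by
      intro a
      rw [MonoidAlgebra.coeff_neg, Finsupp.neg_apply, htrans, mul_inv_rev, inv_inv, mul_neg]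
    rw [Finset.sum_congr rfl (fun a _ => h a), Finset.sum_neg_distrib]
    have h1 := key 1 g
    simp only [inv_one, one_mul] at h1
    rw [h1, hone]
    by_cases hg : g = 1 <;> simp [hg, eq_comm]
  · ext g
    rw [mul_apply_fintype]
    have h : ∀ a : G, (-(transInvol v)).coeff a * v.coeff (a⁻¹ * g) = -(v.coeff a⁻¹ * v.coeff (a⁻¹ * g)) := by
      intro a
      rw [MonoidAlgebra.coeff_neg, Finsupp.neg_apply, htrans, neg_mul]
    rw [Finset.sum_congr rfl (fun a _ => h a), Finset.sum_neg_distrib]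
    have h1 := key2 1 g
    have heq : ∑ a : G, v.coeff a⁻¹ * v.coeff (a⁻¹ * g) = ∑ k : G, v.coeff (k⁻¹ * 1) * v.coeff (k⁻¹ * g) := by
      simp
    rw [heq, h1, hone]
    by_cases hg : g = 1 <;> simp [hg, eq_comm]
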